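/- Assume κ₂ ≠ ν (so B ≠ 0). Let (x₁, x₂, yˢ, y₁, y₂, zˢ, z) be an equilibrium of F with x₁ ≠ 0, x₂ ≠ 0 and z ≠ 0. Then x₂ = (ζ − A·x₁)/B, z = (β₁ − β₂(x₁ + x₂))/α, zˢ = (1 − β₁ + (β₂ − 1)(x₁ + x₂))/αˢ, and x₁ satisfies the quadratic equation φ₂·x₁² + φ₁·x₁ + φ₀ = 0. -/
import Mathlib


theorem coexistence_equilibrium_satisfies_quadratic
    (α αs β₁ β₂ μ γs γ₁ γ₂ κ₁ κ₂ ν νs ζs ζ : ℝ)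
    (hα : 0 < α) (hαs : 0 < αs) (hβ₁pos : 0 < β₁) (hβ₂pos : 0 < β₂)
    (hμ : 0 < μ) (hγs : 0 < γs) (hγ₁ : 0 < γ₁) (hγ₂ : 0 < γ₂)
    (hκ₁ : 0 < κ₁) (hκ₂ : 0 < κ₂) (hν : 0 < ν) (hνs : 0 < νs)
    (hζs : 0 < ζs) (hζ : 0 < ζ)
    (hκν : κ₂ ≠ ν)
    (A : ℝ) (hA : A = α * (γ₁ * κ₁ / (μ + γ₁) - ν))
    (B : ℝ) (hB : B = α * (κ₂ - ν))
    (C : ℝ) (hC : C = α * μ / (μ + γ₁))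
    (D : ℝ) (hD : D = αs * (νs - 1))
    (φ₂ φ₁ φ₀ : ℝ)
    (hφ₂ : φ₂ = (A - B) * ((D * α + C * αs) * β₂ - D * α))
    (hφ₁ : φ₁ = (A - B) * α * ζs * (β₂ - 1) + (D * α + C * αs) * (B * β₁ - ζ * β₂) + D * α * (ζ - B))
    (hφ₀ : φ₀ = α * ζs * ((1 - β₂) * ζ + B * (β₁ - 1)))
    (x₁ x₂ ys y₁ y₂ zs z : ℝ)
    (h1 : x₁ * (1 - x₁ - x₂) - α * x₁ * z - αs * x₁ * zs = 0)
    (h2 : x₂ * (β₁ - β₂ * (x₁ + x₂)) - α * x₂ * z = 0)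
    (h3 : αs * zs * x₁ + μ * y₁ - γs * ys = 0)
    (h4 : α * z * x₁ - (μ + γ₁) * y₁ = 0)
    (h5 : α * z * x₂ - γ₂ * y₂ = 0)
    (h6 : γs * ys - νs * αs * zs * x₁ - ζs * zs = 0)
    (h7 : κ₁ * γ₁ * y₁ + κ₂ * γ₂ * y₂ - ν * α * z * (x₁ + x₂) - ζ * z = 0)
    (hx₁ : x₁ ≠ 0) (hx₂ : x₂ ≠ 0) (hz : z ≠ 0) :
    x₂ = (ζ - A * x₁) / B ∧
    z = (β₁ - β₂ * (x₁ + x₂)) / α ∧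
    zs = (1 - β₁ + (β₂ - 1) * (x₁ + x₂)) / αs ∧
    φ₂ * x₁ ^ 2 + φ₁ * x₁ + φ₀ = 0 := by
  have hμγ : (μ + γ₁) ≠ 0 := by positivity
  have hγ₂ne : γ₂ ≠ 0 := ne_of_gt hγ₂
  have hBne : B ≠ 0 := by
    rw [hB]
    exact mul_ne_zero (ne_of_gt hα) (sub_ne_zero.mpr hκν)
  have hA' : A * (μ + γ₁) = α * (γ₁ * κ₁ - ν * (μ + γ₁)) := by
    have h := div_mul_cancel₀ (γ₁ * κ₁) hμγ
    rw [hA]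
    linear_combination α * h
  have hC' : C * (μ + γ₁) = α * μ := by
    rw [hC]; field_simp
  -- k1 : α z = β₁ - β₂ (x₁+x₂)
  have k1 : α * z = β₁ - β₂ * (x₁ + x₂) := by
    have h : x₂ * ((β₁ - β₂ * (x₁ + x₂)) - α * z) = 0 := by linear_combination h2
    rcases mul_eq_zero.mp h with h | h
    · exact absurd h hx₂
    · linarith
  -- k2 : αs zs = 1 - β₁ + (β₂-1)(x₁+x₂)
  have k2 : αs * zs = 1 - β₁ + (β₂ - 1) * (x₁ + x₂) := by
    have h : x₁ * ((1 - x₁ - x₂) - α * z - αs * zs) = 0 := by linear_combination h1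
    rcases mul_eq_zero.mp h with h | h
    · exact absurd h hx₁
    · linear_combination -h - k1
  -- k3 : B x₂ = ζ - A x₁
  have k3 : B * x₂ = ζ - A * x₁ := by
    have h : z * ((μ + γ₁) * γ₂) * (A * x₁ + B * x₂ - ζ) = 0 := by
      linear_combination ((μ + γ₁) * γ₂) * h7 + (κ₁ * γ₁ * γ₂) * h4 +
        (κ₂ * γ₂ * (μ + γ₁)) * h5 + (z * γ₂ * x₁) * hA' +
        (z * γ₂ * (μ + γ₁) * x₂) * hB
    rcases mul_eq_zero.mp h with h | h
    · rcases mul_eq_zero.mp h with h | h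
      · exact absurd h hz
      · exact absurd h (mul_ne_zero hμγ hγ₂ne)
    · linarith
  -- k4 : C z x₁ = D zs x₁ + ζs zs
  have k4 : C * z * x₁ = D * zs * x₁ + ζs * zs := by
    have h : (μ + γ₁) * (C * z * x₁ - D * zs * x₁ - ζs * zs) = 0 := by
      linear_combination μ * h4 + (μ + γ₁) * h3 + (μ + γ₁) * h6 +
        (z * x₁) * hC' - ((μ + γ₁) * zs * x₁) * hD
    rcases mul_eq_zero.mp h with h | h
    · exact absurd h hμγ
    · linarith
  refine ⟨?_, ?_, ?_, ?_⟩
  · field_simp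
    linarith [k3]
  · field_simp
    linarith [k1]
  · field_simp
    linarith [k2]
  · rw [hφ₂, hφ₁, hφ₀]
    linear_combination (α * αs * B) * k4 - (C * αs * B * x₁) * k1 +
      ((D * α * x₁ + ζs * α) * B) * k2 +
      (C * αs * x₁ * β₂ + (D * α * x₁ + ζs * α) * (β₂ - 1)) * k3
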